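/- arXiv:1810.10055 — 4 statements merged into one kernel-verified Lean document; each statement's English description precedes it below -/
import Mathlib

section
/- For every finite simple graph G, the complement of the Booth–Lueker graph BL(G) is chordal. -/
/-- The Booth–Lueker graph of `G`: vertex set `V(G) ⊕ E(G)`, with all pairs of distinct
original vertices adjacent, and each edge-vertex `e` adjacent to the endpoints of `e`. -/
def BoothLueker {V : Type*} (G : SimpleGraph V) : SimpleGraph (V ⊕ G.edgeSet) where
  Adj x y :=
    match x, y with
    | Sum.inl u, Sum.inl v => u ≠ v
    | Sum.inl u, Sum.inr e => u ∈ (e : Sym2 V)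
    | Sum.inr e, Sum.inl u => u ∈ (e : Sym2 V)
    | Sum.inr _, Sum.inr _ => False
  symm := ⟨by rintro (u | e) (v | f) h <;> simp_all <;> exact Ne.symm h⟩
  loopless := ⟨by rintro (u | e) h <;> simp_all⟩

/-- A cycle `c` in `G` has a chord if two vertices on the cycle are adjacent in `G`
by an edge that is not an edge of the cycle. -/
def HasChord {V : Type*} (G : SimpleGraph V) {v : V} (c : G.Walk v v) : Prop :=
  ∃ u w, u ∈ c.support ∧ w ∈ c.support ∧ G.Adj u w ∧ ¬ c.toSubgraph.Adj u w

/-- A graph is chordal if every cycle of length greater than three has a chord. -/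
def IsChordalGraph {V : Type*} (G : SimpleGraph V) : Prop :=
  ∀ ⦃v : V⦄ (c : G.Walk v v), c.IsCycle → 3 < c.length → HasChord G c

lemma getVert_eq_support_getElem' {V : Type*} {G : SimpleGraph V} {u v : V}
    (p : G.Walk u v) {i : ℕ} (hi : i ≤ p.length) :
    p.getVert i = p.support[i]'(by rw [SimpleGraph.Walk.length_support]; omega) := by
  induction p generalizing i with
  | nil =>
    simp only [SimpleGraph.Walk.length_nil, Nat.le_zero] at hi
    subst hi; simp
  | cons h p ih =>
    cases i with
    | zero => simp
    | succ j =>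
      simp only [SimpleGraph.Walk.support_cons, List.getElem_cons_succ]
      rw [SimpleGraph.Walk.getVert_cons_succ, ih (by simpa using hi)]

lemma cycle_getVert_inj {V : Type*} {G : SimpleGraph V} {v : V} {c : G.Walk v v}
    (hc : c.IsCycle) {a b : ℕ} (ha : a ≤ c.length) (hb : b ≤ c.length)
    (h : c.getVert a = c.getVert b) :
    a = b ∨ (a = 0 ∧ b = c.length) ∨ (a = c.length ∧ b = 0) := by
  have hn := hc.three_le_length
  have hlen := c.length_support
  have key : ∀ j : ℕ, (hj : j < c.length) → c.getVert (j + 1) =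
      c.support.tail[j]'(by simp only [List.length_tail, hlen]; omega) := by
    intro j hj
    rw [List.getElem_tail]
    exact getVert_eq_support_getElem' c (by omega)
  have hA : ∀ k : ℕ, k ≤ c.length → ∃ j, j < c.length ∧ c.getVert (j + 1) = c.getVert k ∧
      (j + 1 = k ∨ (k = 0 ∧ j + 1 = c.length)) := by
    intro k hk
    rcases Nat.eq_zero_or_pos k with rfl | hk0
    · refine ⟨c.length - 1, by omega, ?_, by omega⟩
      rw [show c.length - 1 + 1 = c.length by omega]
      simp [SimpleGraph.Walk.getVert_length]
    · exact ⟨k - 1, by omega, by rw [show k - 1 + 1 = k by omega],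
        by omega⟩
  obtain ⟨ja, hja, hva, hma⟩ := hA a ha
  obtain ⟨jb, hjb, hvb, hmb⟩ := hA b hb
  have heq : c.support.tail[ja]'(by simp only [List.length_tail, hlen]; omega) =
      c.support.tail[jb]'(by simp only [List.length_tail, hlen]; omega) := by
    rw [← key ja hja, ← key jb hjb, hva, hvb, h]
  have := (hc.support_nodup.getElem_inj_iff).mp heq
  omega

lemma getVert_mem_support' {V : Type*} {G : SimpleGraph V} {u v : V}
    (p : G.Walk u v) (i : ℕ) : p.getVert i ∈ p.support := by
  rcases le_or_gt i p.length with hi | hi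
  · rw [getVert_eq_support_getElem' p hi]; exact List.getElem_mem _
  · rw [p.getVert_of_length_le hi.le]; exact p.end_mem_support

/-- For every finite simple graph `G`, the complement of the Booth–Lueker graph
`BL(G)` is chordal. -/
theorem boothLueker_compl_isChordal {V : Type*} [Fintype V] (G : SimpleGraph V) :
    IsChordalGraph (BoothLueker G)ᶜ := by
  intro v c hc hlen
  have hadj : ∀ i : ℕ, i < c.length →
      ((BoothLueker G)ᶜ).Adj (c.getVert i) (c.getVert (i + 1)) :=
    fun i hi => c.adj_getVert_succ hi
  have hnotll : ∀ i : ℕ, i < c.length → ∀ x y : V,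
      c.getVert i = Sum.inl x → c.getVert (i + 1) = Sum.inl y → False := by
    intro i hi x y hx hy
    have h := hadj i hi
    rw [hx, hy, SimpleGraph.compl_adj] at h
    exact h.2 (show x ≠ y from fun e => h.1 (by rw [e]))
  have inr_or : ∀ i : ℕ, i < c.length → (∃ e, c.getVert i = Sum.inr e) ∨
      (∃ e, c.getVert (i + 1) = Sum.inr e) := by
    intro i hi
    cases h0 : c.getVert i with
    | inr e => exact Or.inl ⟨e, rfl⟩
    | inl x =>
      cases h1 : c.getVert (i + 1) with
      | inr e => exact Or.inr ⟨e, rfl⟩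
      | inl y => exact (hnotll i hi x y h0 h1).elim
  have step : ∀ a : ℕ, a ≤ 1 → (∃ e, c.getVert a = Sum.inr e) →
      ∃ b : ℕ, b ≤ 2 ∧ (∃ e, c.getVert b = Sum.inr e) ∧ (∃ f, c.getVert (b + 2) = Sum.inr f) := by
    intro a ha hPa
    cases h2 : c.getVert (a + 2) with
    | inr f => exact ⟨a, by omega, hPa, f, h2⟩
    | inl x =>
      cases h1 : c.getVert (a + 1) with
      | inl y => exact (hnotll (a + 1) (by omega) y x h1 h2).elim
      | inr g =>
        cases h3 : c.getVert (a + 3) with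
        | inr f =>
          exact ⟨a + 1, by omega, ⟨g, h1⟩, f, by rw [show a + 1 + 2 = a + 3 by omega]; exact h3⟩
        | inl z => exact (hnotll (a + 2) (by omega) x z h2 h3).elim
  have main : ∃ b : ℕ, b ≤ 2 ∧ (∃ e, c.getVert b = Sum.inr e) ∧
      (∃ f, c.getVert (b + 2) = Sum.inr f) := by
    rcases inr_or 0 (by omega) with hP | hP
    · exact step 0 (by omega) hP
    · exact step 1 (by omega) hP
  obtain ⟨b, hb2, ⟨e, he⟩, ⟨f, hf⟩⟩ := main
  have hbn : b + 2 ≤ c.length := by omega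
  refine ⟨c.getVert b, c.getVert (b + 2), getVert_mem_support' c b,
    getVert_mem_support' c (b + 2), ?_, ?_⟩
  · rw [SimpleGraph.compl_adj]
    constructor
    · intro h
      rcases cycle_getVert_inj hc (by omega) hbn h with h' | h' | h' <;> omega
    · rw [he, hf]
      exact fun h => h
  · intro habs
    rw [SimpleGraph.Walk.toSubgraph_adj_iff] at habs
    obtain ⟨i, hs, hilt⟩ := habs
    rw [Sym2.eq_iff] at hs
    rcases hs with ⟨h1, h2⟩ | ⟨h1, h2⟩
    · rcases cycle_getVert_inj hc hilt.le (by omega) h1 with h' | h' | h' <;>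
        rcases cycle_getVert_inj hc (by omega : i + 1 ≤ c.length) hbn h2 with h'' | h'' | h'' <;>
        omega
    · rcases cycle_getVert_inj hc hilt.le hbn h1 with h' | h' | h' <;>
        rcases cycle_getVert_inj hc (by omega : i + 1 ≤ c.length) (by omega) h2 with
          h'' | h'' | h'' <;>
        omega
end

section
/- Let G be a finite simple graph on n vertices with degree vector (d_0,...,d_{n-1}), and for a set W of i+1 vertices of BL(G), let c(W) be the number of connected components of the induced subgraph of the complement of BL(G) on W. Then Σ_W (c(W) − 1), summed over all (i+1)-subsets W, equals i*binom(n, i+1) + Σ_{k=1}^{i} Σ_{j=1}^{n} d_{j-1} binom(j-1, k) binom(n-1, i-k). -/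
section Helpers

open Finset

open Classical in
lemma genCount {X : Type*} [Finite X] (H : SimpleGraph X)
    (hS : ∀ x y, (∃ z, H.Adj x z) → (∃ z, H.Adj y z) → H.Reachable x y) :
    Nat.card H.ConnectedComponent
      = Nat.card {x : X // ¬ ∃ z, H.Adj x z} + (if ∃ x, ∃ z : X, H.Adj x z then 1 else 0) := by
  classical
  by_cases hA : ∃ x, ∃ z : X, H.Adj x z
  · obtain ⟨s, hs⟩ := hA
    set f : X → X := fun x => if ∃ z, H.Adj x z then s else x with hf
    have key2 : ∀ x y : X, H.Reachable x y → f x = f y := by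
      intro x y hxy
      obtain ⟨w⟩ := hxy
      induction w with
      | nil => rfl
      | cons h p ih =>
        rename_i a b c
        have ha : f a = s := by simp only [hf]; rw [if_pos ⟨_, h⟩]
        have hb : f b = s := by simp only [hf]; rw [if_pos ⟨_, h.symm⟩]
        rw [ha, ← hb]; exact ih
    have hfs : f s = s := by simp only [hf]; rw [if_pos hs]
    set F : H.ConnectedComponent → X := Quot.lift f key2 with hF
    have hFinj : Function.Injective F := by
      intro c d
      induction c using SimpleGraph.ConnectedComponent.ind
      induction d using SimpleGraph.ConnectedComponent.ind
      rename_i x y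
      intro hfxy
      change f x = f y at hfxy
      apply SimpleGraph.ConnectedComponent.sound
      by_cases hx : ∃ z, H.Adj x z
      · by_cases hy : ∃ z, H.Adj y z
        · exact hS x y hx hy
        · exfalso
          have : f x = s := by simp only [hf]; rw [if_pos hx]
          have hy' : f y = y := by simp only [hf]; rw [if_neg hy]
          rw [this, hy'] at hfxy
          exact hy (hfxy ▸ hs)
      · by_cases hy : ∃ z, H.Adj y z
        · exfalso
          have hx' : f x = x := by simp only [hf]; rw [if_neg hx]
          have : f y = s := by simp only [hf]; rw [if_pos hy]
          rw [hx', this] at hfxy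
          exact hx (hfxy ▸ hs)
        · have hx' : f x = x := by simp only [hf]; rw [if_neg hx]
          have hy' : f y = y := by simp only [hf]; rw [if_neg hy]
          rw [hx', hy'] at hfxy
          exact hfxy ▸ SimpleGraph.Reachable.refl x
    have hcard : Nat.card H.ConnectedComponent = Nat.card (Set.range F) :=
      (Nat.card_range_of_injective hFinj).symm
    have hrange : Set.range F = insert s {x : X | ¬ ∃ z, H.Adj x z} := by
      ext x
      constructor
      · rintro ⟨c, rfl⟩
        induction c using SimpleGraph.ConnectedComponent.ind
        rename_i y
        change f y ∈ _
        by_cases hy : ∃ z, H.Adj y z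
        · left; simp only [hf]; rw [if_pos hy]
        · right; simp only [hf]; rw [if_neg hy]; exact hy
      · rintro (h | hx)
        · refine ⟨H.connectedComponentMk s, ?_⟩
          have : f s = x := by rw [hfs, h]
          exact this
        · exact ⟨H.connectedComponentMk x, by change f x = x; simp only [hf]; rw [if_neg hx]⟩
    rw [hcard, if_pos ⟨s, hs⟩]
    rw [Nat.card_coe_set_eq, hrange, Set.ncard_insert_of_notMem (by simpa using hs) (Set.toFinite _)]
    rw [← Nat.card_coe_set_eq]
    rfl
  · rw [if_neg hA]
    push_neg at hA
    have hinj : Function.Injective (H.connectedComponentMk) := by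
      intro x y hxy
      obtain ⟨w⟩ := SimpleGraph.ConnectedComponent.exact hxy
      cases w with
      | nil => rfl
      | cons h _ => exact absurd h (hA _ _)
    have hsurj : Function.Surjective (H.connectedComponentMk) := Quot.mk_surjective
    have : Nat.card H.ConnectedComponent = Nat.card X :=
      (Nat.card_eq_of_bijective _ ⟨hinj, hsurj⟩).symm
    rw [this, add_zero]
    have : {x : X // ¬ ∃ z, H.Adj x z} ≃ X := Equiv.subtypeUnivEquiv (fun x => by push_neg; exact hA x)
    rw [Nat.card_congr this.symm]



variable {V : Type*} (G : SimpleGraph V)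

lemma BLc_ll (u v : V) : ¬ ((BoothLueker G)ᶜ).Adj (.inl u) (.inl v) := by
  simp [SimpleGraph.compl_adj, BoothLueker]

lemma BLc_lr (u : V) (e : G.edgeSet) :
    ((BoothLueker G)ᶜ).Adj (.inl u) (.inr e) ↔ u ∉ (e : Sym2 V) := by
  simp [SimpleGraph.compl_adj, BoothLueker]

lemma BLc_rl (u : V) (e : G.edgeSet) :
    ((BoothLueker G)ᶜ).Adj (.inr e) (.inl u) ↔ u ∉ (e : Sym2 V) := by
  simp [SimpleGraph.compl_adj, BoothLueker]

lemma BLc_rr (e f : G.edgeSet) :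
    ((BoothLueker G)ᶜ).Adj (.inr e) (.inr f) ↔ e ≠ f := by
  simp [SimpleGraph.compl_adj, BoothLueker]

section
variable [Fintype V] [DecidableEq V] [DecidableRel G.Adj]

open Classical in
lemma perW (W : Finset (V ⊕ G.edgeSet)) :
    Nat.card (SimpleGraph.induce (↑W : Set (V ⊕ G.edgeSet)) ((BoothLueker G)ᶜ)).ConnectedComponent
      = (Finset.univ.filter (fun v : V => Sum.inl v ∈ W ∧
            ∀ e : G.edgeSet, Sum.inr e ∈ W → v ∈ (e : Sym2 V))).card
        + (if ∃ e : G.edgeSet, Sum.inr e ∈ W then 1 else 0) := by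
  classical
  set H := SimpleGraph.induce (↑W : Set (V ⊕ G.edgeSet)) ((BoothLueker G)ᶜ) with hH
  have hadj : ∀ (x y : (↑W : Set (V ⊕ G.edgeSet))), H.Adj x y ↔ ((BoothLueker G)ᶜ).Adj x.1 y.1 := by
    intro x y; rfl
  set Q : V ⊕ G.edgeSet → Prop := Sum.elim
      (fun v => ∀ e : G.edgeSet, Sum.inr e ∈ W → v ∈ (e : Sym2 V))
      (fun e => (∀ f : G.edgeSet, Sum.inr f ∈ W → f = e) ∧
        ∀ u : V, Sum.inl u ∈ W → u ∈ (e : Sym2 V)) with hQ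
  have isoQ : ∀ (x : V ⊕ G.edgeSet) (hx : x ∈ W),
      (¬ ∃ z, H.Adj ⟨x, hx⟩ z) ↔ Q x := by
    rintro (v | e) hx
    · constructor
      · intro h e he
        by_contra hve
        exact h ⟨⟨Sum.inr e, he⟩, (BLc_lr G v e).mpr hve⟩
      · rintro hq ⟨⟨(u | e), hy⟩, hadj'⟩
        · exact BLc_ll G v u hadj'
        · exact ((BLc_lr G v e).mp hadj') (hq e hy)
    · constructor
      · intro h
        constructor
        · intro f hf
          by_contra hfe
          exact h ⟨⟨Sum.inr f, hf⟩, (BLc_rr G e f).mpr (fun hh => hfe hh.symm)⟩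
        · intro u hu
          by_contra hue
          exact h ⟨⟨Sum.inl u, hu⟩, (BLc_rl G u e).mpr hue⟩
      · rintro ⟨h1, h2⟩ ⟨⟨(u | f), hy⟩, hadj'⟩
        · exact ((BLc_rl G u e).mp hadj') (h2 u hy)
        · exact ((BLc_rr G e f).mp hadj') (h1 f hy).symm
  have hIsoCard : Nat.card {x : (↑W : Set (V ⊕ G.edgeSet)) // ¬ ∃ z, H.Adj x z}
      = (W.filter Q).card := by
    have hbij : Function.Bijective
        (fun a : {a : V ⊕ G.edgeSet // a ∈ W ∧ Q a} =>
          (⟨⟨a.1, a.2.1⟩, (isoQ a.1 a.2.1).mpr a.2.2⟩ :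
            {x : (↑W : Set (V ⊕ G.edgeSet)) // ¬ ∃ z, H.Adj x z})) := by
      constructor
      · intro a b hab
        apply Subtype.ext
        exact congrArg (fun x => x.1.1) hab
      · rintro ⟨⟨x, hx⟩, hiso⟩
        exact ⟨⟨x, hx, (isoQ x hx).mp hiso⟩, rfl⟩
    rw [← Nat.card_eq_of_bijective _ hbij,
      Nat.card_congr (Equiv.subtypeEquivRight
        (fun a : V ⊕ G.edgeSet => (by simp [Finset.mem_filter] :
          (a ∈ W ∧ Q a) ↔ a ∈ (↑(W.filter Q) : Set (V ⊕ G.edgeSet))))),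
      Nat.card_coe_set_eq, Set.ncard_coe_finset]
  have hLeft : (W.filter Q).toLeft = Finset.univ.filter (fun v : V => Sum.inl v ∈ W ∧
      ∀ e : G.edgeSet, Sum.inr e ∈ W → v ∈ (e : Sym2 V)) := by
    ext v
    simp [hQ, Finset.mem_filter]
  by_cases hB : ∃ e : G.edgeSet, Sum.inr e ∈ W
  · by_cases hdg : ∃ e : G.edgeSet, Sum.inr e ∈ W ∧ (∀ f : G.edgeSet, Sum.inr f ∈ W → f = e) ∧
        (∀ u : V, Sum.inl u ∈ W → u ∈ (e : Sym2 V))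
    · -- degenerate case: no adjacency at all
      obtain ⟨e, he, h1, h2⟩ := hdg
      have hno : ∀ x y : (↑W : Set (V ⊕ G.edgeSet)), ¬ H.Adj x y := by
        rintro ⟨(u | f), hx⟩ ⟨(w | g), hy⟩ h
        · exact BLc_ll G u w h
        · exact ((BLc_lr G u g).mp h) ((h1 g hy) ▸ h2 u hx)
        · exact ((BLc_rl G w f).mp h) ((h1 f hx) ▸ h2 w hy)
        · exact ((BLc_rr G f g).mp h) ((h1 f hx).trans (h1 g hy).symm)
      rw [genCount H (fun x y hx _ => absurd hx.choose_spec (hno x _)),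
        if_neg (by rintro ⟨x, z, hz⟩; exact hno x z hz), add_zero, hIsoCard]
      have hfilt : W.filter Q = W := by
        apply Finset.filter_true_of_mem
        rintro (v | f) hx
        · exact fun g hg => (h1 g hg) ▸ h2 v hx
        · rw [hQ]
          have := h1 f hx
          subst this
          exact ⟨h1, h2⟩
      rw [hfilt, if_pos hB, ← Finset.card_toLeft_add_card_toRight (u := W)]
      congr 1
      · rw [← hLeft, hfilt]
      · have : W.toRight = {e} := by
          ext f
          simp only [Finset.mem_toRight, Finset.mem_singleton]
          exact ⟨fun hf => h1 f hf, fun hf => hf ▸ he⟩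
        rw [this, Finset.card_singleton]
    · -- main case
      obtain ⟨e₀, he₀⟩ := hB
      push_neg at hdg
      have nbr_of_inr : ∀ (g : G.edgeSet) (hg : Sum.inr g ∈ W),
          ∃ z, H.Adj ⟨Sum.inr g, hg⟩ z := by
        intro g hg
        rcases Classical.em (∀ f : G.edgeSet, Sum.inr f ∈ W → f = g) with h | h
        · obtain ⟨u, hu, hue⟩ := hdg g hg h
          exact ⟨⟨Sum.inl u, hu⟩, (BLc_rl G u g).mpr hue⟩
        · push_neg at h
          obtain ⟨f, hf, hfg⟩ := h
          exact ⟨⟨Sum.inr f, hf⟩, (BLc_rr G g f).mpr (fun hh => hfg hh.symm)⟩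
      have reach0 : ∀ (g : G.edgeSet) (hg : Sum.inr g ∈ W),
          H.Reachable ⟨Sum.inr g, hg⟩ ⟨Sum.inr e₀, he₀⟩ := by
        intro g hg
        rcases Classical.em (g = e₀) with h | h
        · subst h; rfl
        · exact ((hadj ⟨Sum.inr g, hg⟩ ⟨Sum.inr e₀, he₀⟩).mpr ((BLc_rr G g e₀).mpr h)).reachable
      have reach : ∀ (x : (↑W : Set (V ⊕ G.edgeSet))), (∃ z, H.Adj x z) →
          H.Reachable x ⟨Sum.inr e₀, he₀⟩ := by
        rintro ⟨(u | g), hx⟩ ⟨⟨(w | f), hy⟩, hxy⟩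
        · exact absurd hxy (BLc_ll G u w)
        · exact (SimpleGraph.Adj.reachable hxy).trans (reach0 f hy)
        · exact reach0 g hx
        · exact reach0 g hx
      rw [genCount H (fun x y hx hy => (reach x hx).trans (reach y hy).symm),
        if_pos ⟨_, nbr_of_inr e₀ he₀⟩, hIsoCard, if_pos ⟨e₀, he₀⟩]
      congr 1
      rw [← hLeft, ← Finset.card_toLeft_add_card_toRight (u := W.filter Q)]
      have : (W.filter Q).toRight = ∅ := by
        ext f
        simp only [Finset.mem_toRight, Finset.mem_filter, Finset.notMem_empty, iff_false, not_and]
        intro hf hq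
        rw [hQ] at hq
        obtain ⟨u, hu, hue⟩ := hdg f hf hq.1
        exact hue (hq.2 u hu)
      rw [this, Finset.card_empty, add_zero]
  · -- no edge-vertices in W
    have hno : ∀ x y : (↑W : Set (V ⊕ G.edgeSet)), ¬ H.Adj x y := by
      rintro ⟨(u | f), hx⟩ ⟨(w | g), hy⟩ h
      · exact BLc_ll G u w h
      · exact hB ⟨g, hy⟩
      · exact hB ⟨f, hx⟩
      · exact hB ⟨f, hx⟩
    rw [genCount H (fun x y hx _ => absurd hx.choose_spec (hno x _)),
      if_neg (by rintro ⟨x, z, hz⟩; exact hno x z hz), add_zero, hIsoCard, if_neg hB, add_zero]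
    have hfilt : W.filter Q = W := by
      apply Finset.filter_true_of_mem
      rintro (v | f) hx
      · exact fun g hg => absurd hg (fun h => hB ⟨g, h⟩)
      · exact absurd hx (fun h => hB ⟨f, h⟩)
    rw [hfilt, ← Finset.card_toLeft_add_card_toRight (u := W), ← hLeft, hfilt]
    have : W.toRight = ∅ := by
      ext f
      simp only [Finset.mem_toRight, Finset.notMem_empty, iff_false]
      exact fun h => hB ⟨f, h⟩
    rw [this, Finset.card_empty, add_zero]

open Classical in
lemma countEmpty (i : ℕ) :
    (((Finset.univ : Finset (V ⊕ G.edgeSet)).powersetCard (i+1)).filter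
        (fun W => ¬ ∃ e : G.edgeSet, Sum.inr e ∈ W)).card
      = (Fintype.card V).choose (i+1) := by
  classical
  rw [← Finset.card_univ, ← Finset.card_powersetCard (i+1) (Finset.univ : Finset V)]
  refine Finset.card_bij' (fun W _ => W.toLeft)
    (fun A _ => A.disjSum (∅ : Finset G.edgeSet)) ?_ ?_ ?_ ?_
  · intro W hW
    rw [Finset.mem_filter, Finset.mem_powersetCard] at hW
    obtain ⟨⟨-, hcard⟩, hne⟩ := hW
    rw [Finset.mem_powersetCard]
    refine ⟨Finset.subset_univ _, ?_⟩
    have hR : W.toRight = ∅ := by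
      ext f
      simp only [Finset.mem_toRight, Finset.notMem_empty, iff_false]
      exact fun h => hne ⟨f, h⟩
    have := Finset.card_toLeft_add_card_toRight (u := W)
    rw [hR, Finset.card_empty, add_zero, hcard] at this
    exact this
  · intro A hA
    rw [Finset.mem_powersetCard] at hA
    rw [Finset.mem_filter, Finset.mem_powersetCard]
    refine ⟨⟨Finset.subset_univ _, ?_⟩, ?_⟩
    · rw [Finset.card_disjSum, Finset.card_empty, add_zero, hA.2]
    · rintro ⟨e, he⟩
      simpa using Finset.inr_mem_disjSum.mp he
  · intro W hW
    rw [Finset.mem_filter] at hW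
    have hR : W.toRight = ∅ := by
      ext f
      simp only [Finset.mem_toRight, Finset.notMem_empty, iff_false]
      exact fun h => hW.2 ⟨f, h⟩
    have h2 := Finset.toLeft_disjSum_toRight (u := W)
    rw [hR] at h2
    exact h2
  · intro A _
    exact Finset.toLeft_disjSum

lemma cardEv (v : V) :
    (Finset.univ.filter (fun e : G.edgeSet => v ∈ (e : Sym2 V))).card = G.degree v := by
  classical
  rw [← SimpleGraph.card_incidenceFinset_eq_degree]
  refine Finset.card_bij (fun (e : G.edgeSet) _ => (e : Sym2 V)) ?_ ?_ ?_
  · intro e he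
    rw [Finset.mem_filter] at he
    rw [SimpleGraph.mem_incidenceFinset]
    exact ⟨e.2, he.2⟩
  · intro e₁ h₁ e₂ h₂ h
    exact Subtype.ext h
  · intro s hs
    rw [SimpleGraph.mem_incidenceFinset] at hs
    exact ⟨⟨s, hs.1⟩, Finset.mem_filter.mpr ⟨Finset.mem_univ _, hs.2⟩, rfl⟩

open Classical in
lemma countV (i : ℕ) (v : V) :
    (((Finset.univ : Finset (V ⊕ G.edgeSet)).powersetCard (i+1)).filter
        (fun W => Sum.inl v ∈ W ∧ ∀ e : G.edgeSet, Sum.inr e ∈ W → v ∈ (e : Sym2 V))).card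
      = ∑ k ∈ Finset.range (i+1),
          (G.degree v).choose k * (Fintype.card V - 1).choose (i - k) := by
  classical
  set Ev : Finset G.edgeSet := Finset.univ.filter (fun e : G.edgeSet => v ∈ (e : Sym2 V))
    with hEv
  have hmapsto : ∀ W ∈ ((Finset.univ : Finset (V ⊕ G.edgeSet)).powersetCard (i+1)).filter
      (fun W => Sum.inl v ∈ W ∧ ∀ e : G.edgeSet, Sum.inr e ∈ W → v ∈ (e : Sym2 V)),
      W.toRight.card ∈ Finset.range (i+1) := by
    intro W hW
    rw [Finset.mem_filter, Finset.mem_powersetCard] at hW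
    obtain ⟨⟨-, hcard⟩, hv, -⟩ := hW
    have h1 := Finset.card_toLeft_add_card_toRight (u := W)
    have h2 : 0 < W.toLeft.card := Finset.card_pos.mpr ⟨v, Finset.mem_toLeft.mpr hv⟩
    rw [Finset.mem_range]
    omega
  rw [Finset.card_eq_sum_card_fiberwise hmapsto]
  refine Finset.sum_congr rfl ?_
  intro k hk
  rw [Finset.mem_range] at hk
  have hki : k ≤ i := by omega
  rw [← cardEv G v, ← hEv]
  have hrhs : Ev.card.choose k * (Fintype.card V - 1).choose (i - k)
      = ((Ev.powersetCard k) ×ˢ ((Finset.univ.erase v).powersetCard (i-k))).card := by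
    rw [Finset.card_product, Finset.card_powersetCard, Finset.card_powersetCard,
      Finset.card_erase_of_mem (Finset.mem_univ v), Finset.card_univ]
  rw [hrhs]
  refine Finset.card_bij' (fun W _ => (W.toRight, W.toLeft.erase v))
    (fun p _ => (insert v p.2).disjSum p.1) ?_ ?_ ?_ ?_
  · intro W hW
    rw [Finset.mem_filter, Finset.mem_filter, Finset.mem_powersetCard] at hW
    obtain ⟨⟨⟨-, hcard⟩, hv, hcond⟩, hkcard⟩ := hW
    have h1 := Finset.card_toLeft_add_card_toRight (u := W)
    have hvL : v ∈ W.toLeft := Finset.mem_toLeft.mpr hv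
    rw [Finset.mem_product, Finset.mem_powersetCard, Finset.mem_powersetCard]
    refine ⟨⟨?_, hkcard⟩, ?_, ?_⟩
    · intro e he
      rw [Finset.mem_toRight] at he
      rw [hEv, Finset.mem_filter]
      exact ⟨Finset.mem_univ _, hcond e he⟩
    · intro u hu
      rw [Finset.mem_erase] at hu
      rw [Finset.mem_erase]
      exact ⟨hu.1, Finset.mem_univ _⟩
    · rw [Finset.card_erase_of_mem hvL]
      omega
  · intro p hp
    rw [Finset.mem_product, Finset.mem_powersetCard, Finset.mem_powersetCard] at hp
    obtain ⟨⟨hB, hBcard⟩, hA, hAcard⟩ := hp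
    have hvA : v ∉ p.2 := fun h => (Finset.mem_erase.mp (hA h)).1 rfl
    rw [Finset.mem_filter, Finset.mem_filter, Finset.mem_powersetCard]
    refine ⟨⟨⟨Finset.subset_univ _, ?_⟩, ?_, ?_⟩, ?_⟩
    · rw [Finset.card_disjSum, Finset.card_insert_of_notMem hvA, hAcard, hBcard]
      omega
    · rw [Finset.inl_mem_disjSum]
      exact Finset.mem_insert_self v _
    · intro e he
      rw [Finset.inr_mem_disjSum] at he
      have := hB he
      rw [hEv, Finset.mem_filter] at this
      exact this.2
    · rw [Finset.toRight_disjSum]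
      exact hBcard
  · intro W hW
    rw [Finset.mem_filter, Finset.mem_filter, Finset.mem_powersetCard] at hW
    have hvL : v ∈ W.toLeft := Finset.mem_toLeft.mpr hW.1.2.1
    have h2 := Finset.toLeft_disjSum_toRight (u := W)
    show (insert v (W.toLeft.erase v)).disjSum W.toRight = W
    rw [Finset.insert_erase hvL]
    exact h2
  · intro p hp
    rw [Finset.mem_product, Finset.mem_powersetCard, Finset.mem_powersetCard] at hp
    have hvA : v ∉ p.2 := fun h => (Finset.mem_erase.mp (hp.2.1 h)).1 rfl
    show (((insert v p.2).disjSum p.1).toRight, ((insert v p.2).disjSum p.1).toLeft.erase v) = p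
    rw [Finset.toRight_disjSum, Finset.toLeft_disjSum, Finset.erase_insert hvA]

lemma sumDeg (k : ℕ) :
    ∑ v : V, (G.degree v).choose k
      = ∑ j ∈ Finset.Icc 1 (Fintype.card V),
          (Finset.univ.filter (fun v => G.degree v = j - 1)).card * (j - 1).choose k := by
  classical
  have h1 : ∑ v : V, (G.degree v).choose k
      = ∑ m ∈ Finset.range (Fintype.card V),
          ∑ v ∈ Finset.univ.filter (fun v => G.degree v = m), (G.degree v).choose k :=
    (Finset.sum_fiberwise_of_maps_to
      (fun v _ => Finset.mem_range.mpr (G.degree_lt_card_verts v)) _).symm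
  rw [h1]
  have h2 : ∀ m : ℕ, ∑ v ∈ Finset.univ.filter (fun v => G.degree v = m),
      (G.degree v).choose k
      = (Finset.univ.filter (fun v => G.degree v = m)).card * m.choose k := by
    intro m
    rw [Finset.sum_congr rfl (fun v hv => by
      rw [(Finset.mem_filter.mp hv).2]), Finset.sum_const, smul_eq_mul]
  simp_rw [h2]
  refine Finset.sum_bij' (fun m _ => m + 1) (fun j _ => j - 1) ?_ ?_ ?_ ?_ ?_
  · intro m hm
    rw [Finset.mem_range] at hm
    simp only [Finset.mem_Icc]
    omega
  · intro j hj
    rw [Finset.mem_Icc] at hj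
    simp only [Finset.mem_range]
    omega
  · intro m _
    show m + 1 - 1 = m
    omega
  · intro j hj
    rw [Finset.mem_Icc] at hj
    show j - 1 + 1 = j
    omega
  · intro m _
    simp

end

end Helpers

/-- For every `(i+1)`-subset `W` of the vertices of `BL(G)`, let `c(W)` be the number of
connected components of the induced subgraph of the complement of `BL(G)` on `W`.  Then
`∑_W (c(W) − 1) = i·binom(n, i+1) + ∑_{k=1}^{i} ∑_{j=1}^{n} d_{j-1} binom(j-1, k) binom(n-1, i-k)`. -/
theorem sum_components_boothLueker {V : Type*} [Fintype V] [DecidableEq V]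
    (G : SimpleGraph V) [DecidableRel G.Adj]
    (n : ℕ) (hn : n = Fintype.card V)
    (d : ℕ → ℕ)
    (hd : ∀ k, d k = (Finset.univ.filter fun v => G.degree v = k).card)
    (i : ℕ) :
    ∑ W ∈ Finset.powersetCard (i + 1) (Finset.univ : Finset (V ⊕ G.edgeSet)),
        ((Nat.card (SimpleGraph.induce (↑W) ((BoothLueker G)ᶜ)).ConnectedComponent : ℤ) - 1)
      = (i : ℤ) * (n.choose (i + 1) : ℤ)
        + ∑ k ∈ Finset.Icc 1 i, ∑ j ∈ Finset.Icc 1 n,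
            (d (j - 1) : ℤ) * ((j - 1).choose k : ℤ) * ((n - 1).choose (i - k) : ℤ) := by
  classical
  subst hn
  have step1 : ∀ W ∈ Finset.powersetCard (i + 1) (Finset.univ : Finset (V ⊕ G.edgeSet)),
      ((Nat.card (SimpleGraph.induce (↑W : Set (V ⊕ G.edgeSet))
          ((BoothLueker G)ᶜ)).ConnectedComponent : ℤ) - 1)
        = ((Finset.univ.filter (fun v : V => Sum.inl v ∈ W ∧
              ∀ e : G.edgeSet, Sum.inr e ∈ W → v ∈ (e : Sym2 V))).card : ℤ)
          - (if ¬ ∃ e : G.edgeSet, Sum.inr e ∈ W then (1 : ℤ) else 0) := by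
    intro W _
    rw [perW G W]
    by_cases h : ∃ e : G.edgeSet, Sum.inr e ∈ W
    · rw [if_pos h, if_neg (not_not.mpr h)]
      push_cast
      ring
    · rw [if_neg h, if_pos h]
      push_cast
      ring
  rw [Finset.sum_congr rfl step1, Finset.sum_sub_distrib, Finset.sum_boole, countEmpty G i]
  have hswap : ∑ W ∈ Finset.powersetCard (i + 1) (Finset.univ : Finset (V ⊕ G.edgeSet)),
      (Finset.univ.filter (fun v : V => Sum.inl v ∈ W ∧
        ∀ e : G.edgeSet, Sum.inr e ∈ W → v ∈ (e : Sym2 V))).card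
      = ∑ v : V, (((Finset.univ : Finset (V ⊕ G.edgeSet)).powersetCard (i+1)).filter
          (fun W => Sum.inl v ∈ W ∧
            ∀ e : G.edgeSet, Sum.inr e ∈ W → v ∈ (e : Sym2 V))).card := by
    simp_rw [Finset.card_filter]
    exact Finset.sum_comm
  have hnat : ∑ v : V, ∑ k ∈ Finset.range (i+1),
        (G.degree v).choose k * (Fintype.card V - 1).choose (i - k)
      = Fintype.card V * (Fintype.card V - 1).choose i
        + ∑ k ∈ Finset.Icc 1 i, ∑ j ∈ Finset.Icc 1 (Fintype.card V),
            (Finset.univ.filter (fun v => G.degree v = j - 1)).card * (j - 1).choose k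
              * ((Fintype.card V - 1).choose (i - k)) := by
    rw [Finset.sum_comm]
    have hins : Finset.range (i+1) = insert 0 (Finset.Icc 1 i) := by
      ext x
      simp only [Finset.mem_range, Finset.mem_insert, Finset.mem_Icc]
      omega
    rw [hins, Finset.sum_insert (by simp)]
    congr 1
    · simp only [Nat.choose_zero_right, one_mul, Nat.sub_zero]
      rw [Finset.sum_const, Finset.card_univ, smul_eq_mul]
    · refine Finset.sum_congr rfl fun k _ => ?_
      rw [← Finset.sum_mul, sumDeg G k, Finset.sum_mul]
  have hid : (Fintype.card V : ℤ) * ((Fintype.card V - 1).choose i : ℤ)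
      = ((i : ℤ) + 1) * ((Fintype.card V).choose (i+1) : ℤ) := by
    rcases hc : Fintype.card V with _ | m
    · simp
    · have h := Nat.add_one_mul_choose_eq m i
      have h2 : (m+1) * Nat.choose m i = (i+1) * Nat.choose (m+1) (i+1) :=
        h.trans (Nat.mul_comm _ _)
      have h3 : (m + 1 : ℕ) - 1 = m := rfl
      rw [h3]
      exact_mod_cast h2
  rw [← Nat.cast_sum, hswap, Finset.sum_congr rfl (fun v _ => countV G i v), hnat]
  simp only [hd]
  push_cast
  linarith [hid]
end

section
/- Let G be a finite simple graph with n vertices and m edges. Then for every j ≥ 1, the (j, j+1) graded Betti number of S/I over the edge ideal I of the complement of BL(G) equals m*binom(m+n−3, j) − binom(m, j+1). -/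
section
open Finset

variable {V : Type*} [Fintype V] [DecidableEq V] (G : SimpleGraph V) [DecidableRel G.Adj]

/-- `x` is an isolated vertex of `BL(G)[W]`: an edge-vertex none of whose endpoints is in `W`. -/
def IsoIn (W : Finset (V ⊕ G.edgeSet)) : V ⊕ G.edgeSet → Prop
  | Sum.inl _ => False
  | Sum.inr e => ∀ u ∈ (e : Sym2 V), Sum.inl u ∉ W

instance (W : Finset (V ⊕ G.edgeSet)) : DecidablePred (IsoIn G W) := by
  rintro (u | e)
  · exact .isFalse (by simp [IsoIn])
  · unfold IsoIn; infer_instance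

lemma BL_adj_P {W : Finset (V ⊕ G.edgeSet)} {x y : (↑W : Set (V ⊕ G.edgeSet))}
    (h : ((BoothLueker G).induce ↑W).Adj x y) :
    ¬ IsoIn G W x.val ∧ ¬ IsoIn G W y.val := by
  obtain ⟨x, hxW⟩ := x; obtain ⟨y, hyW⟩ := y
  have h' : (BoothLueker G).Adj x y := h
  rcases x with u | e <;> rcases y with v | f
  · exact ⟨by simp [IsoIn], by simp [IsoIn]⟩
  · have hm : u ∈ (f : Sym2 V) := h'
    exact ⟨by simp [IsoIn], fun hIso => hIso u hm hxW⟩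
  · have hm : v ∈ (e : Sym2 V) := h'
    exact ⟨fun hIso => hIso v hm hyW, by simp [IsoIn]⟩
  · exact absurd h' (by simp [BoothLueker])

lemma reach_iff (W : Finset (V ⊕ G.edgeSet)) (x y : (↑W : Set (V ⊕ G.edgeSet))) :
    ((BoothLueker G).induce ↑W).Reachable x y ↔
      x = y ∨ (¬ IsoIn G W x.val ∧ ¬ IsoIn G W y.val) := by
  constructor
  · intro h
    rw [SimpleGraph.reachable_iff_reflTransGen] at h
    induction h with
    | refl => left; rfl
    | tail _ hadj ih =>
        right
        obtain ⟨h1, h2⟩ := BL_adj_P G hadj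
        rcases ih with rfl | ⟨hx, _⟩
        · exact ⟨h1, h2⟩
        · exact ⟨hx, h2⟩
  · rintro (rfl | ⟨hx, hy⟩)
    · exact SimpleGraph.Reachable.refl x
    · have key : ∀ z : (↑W : Set (V ⊕ G.edgeSet)), ¬ IsoIn G W z.val →
          ∃ u : V, ∃ hu : Sum.inl u ∈ W,
            ((BoothLueker G).induce ↑W).Reachable z ⟨Sum.inl u, by simpa using hu⟩ := by
        rintro ⟨z, hzW⟩ hz
        rcases z with u | e
        · exact ⟨u, by simpa using hzW, SimpleGraph.Reachable.refl _⟩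
        · simp only [IsoIn, not_forall] at hz
          obtain ⟨u, hu, huW⟩ := hz
          rw [not_not] at huW
          refine ⟨u, huW, ?_⟩
          have hadj : ((BoothLueker G).induce (↑W : Set (V ⊕ G.edgeSet))).Adj
              ⟨Sum.inr e, hzW⟩ ⟨Sum.inl u, by simpa using huW⟩ := by
            show (BoothLueker G).Adj (Sum.inr e) (Sum.inl u)
            exact hu
          exact hadj.reachable
      obtain ⟨u, hu, hxu⟩ := key x hx
      obtain ⟨v, hv, hyv⟩ := key y hy
      refine hxu.trans (SimpleGraph.Reachable.trans ?_ hyv.symm)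
      by_cases huv : u = v
      · subst huv; exact SimpleGraph.Reachable.refl _
      · have hadj : ((BoothLueker G).induce (↑W : Set (V ⊕ G.edgeSet))).Adj
            ⟨Sum.inl u, by simpa using hu⟩ ⟨Sum.inl v, by simpa using hv⟩ := by
          show (BoothLueker G).Adj (Sum.inl u) (Sum.inl v)
          exact huv
        exact hadj.reachable

noncomputable def compEquiv (W : Finset (V ⊕ G.edgeSet)) :
    ((BoothLueker G).induce (↑W : Set (V ⊕ G.edgeSet))).ConnectedComponent ≃
      ({x : (↑W : Set (V ⊕ G.edgeSet)) // IsoIn G W x.val} ⊕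
        PLift (∃ x : (↑W : Set (V ⊕ G.edgeSet)), ¬ IsoIn G W x.val)) where
  toFun := Quot.lift
    (fun x => if h : IsoIn G W x.val then Sum.inl ⟨x, h⟩ else Sum.inr ⟨⟨x, h⟩⟩)
    (by
      intro a b hab
      rcases (reach_iff G W a b).mp hab with rfl | ⟨ha, hb⟩
      · rfl
      · rw [dif_neg ha, dif_neg hb])
  invFun z := z.elim (fun p => ((BoothLueker G).induce ↑W).connectedComponentMk p.val)
    (fun h => ((BoothLueker G).induce ↑W).connectedComponentMk h.down.choose)
  left_inv := by
    refine SimpleGraph.ConnectedComponent.ind (fun x => ?_)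
    by_cases h : IsoIn G W x.val
    · show (if h : IsoIn G W x.val then (Sum.inl ⟨x, h⟩ : {x : (↑W : Set (V ⊕ G.edgeSet)) //
        IsoIn G W x.val} ⊕ PLift _) else Sum.inr ⟨⟨x, h⟩⟩).elim _ _ = _
      rw [dif_pos h]
      rfl
    · show (if h : IsoIn G W x.val then (Sum.inl ⟨x, h⟩ : {x : (↑W : Set (V ⊕ G.edgeSet)) //
        IsoIn G W x.val} ⊕ PLift _) else Sum.inr ⟨⟨x, h⟩⟩).elim _ _ = _
      rw [dif_neg h]
      apply SimpleGraph.ConnectedComponent.sound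
      rw [reach_iff]
      exact Or.inr ⟨(⟨x, h⟩ : ∃ x : (↑W : Set (V ⊕ G.edgeSet)), ¬ IsoIn G W x.val).choose_spec, h⟩
  right_inv := by
    rintro (⟨x, h⟩ | p)
    · show (if h' : IsoIn G W x.val then (Sum.inl ⟨x, h'⟩ : {x : (↑W : Set (V ⊕ G.edgeSet)) //
        IsoIn G W x.val} ⊕ PLift _) else Sum.inr ⟨⟨x, h'⟩⟩) = _
      rw [dif_pos h]
    · have hc := p.down.choose_spec
      show (if h' : IsoIn G W p.down.choose.val then (Sum.inl ⟨_, h'⟩ :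
        {x : (↑W : Set (V ⊕ G.edgeSet)) // IsoIn G W x.val} ⊕ PLift _)
          else Sum.inr ⟨⟨_, h'⟩⟩) = Sum.inr p
      rw [dif_neg hc]

lemma exists_notIso_iff (W : Finset (V ⊕ G.edgeSet)) :
    (∃ x : (↑W : Set (V ⊕ G.edgeSet)), ¬ IsoIn G W x.val) ↔ ∃ u : V, Sum.inl u ∈ W := by
  constructor
  · rintro ⟨⟨x, hxW⟩, hx⟩
    rcases x with u | e
    · exact ⟨u, by simpa using hxW⟩
    · simp only [IsoIn, not_forall] at hx
      obtain ⟨u, _, huW⟩ := hx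
      rw [not_not] at huW
      exact ⟨u, huW⟩
  · rintro ⟨u, hu⟩
    exact ⟨⟨Sum.inl u, by simpa using hu⟩, by simp [IsoIn]⟩

lemma card_comps (W : Finset (V ⊕ G.edgeSet)) :
    Nat.card ((BoothLueker G).induce (↑W : Set (V ⊕ G.edgeSet))).ConnectedComponent
      = (W.filter (IsoIn G W)).card + (if ∃ u : V, Sum.inl u ∈ W then 1 else 0) := by
  rw [Nat.card_congr (compEquiv G W), Nat.card_sum]
  congr 1
  · rw [Nat.card_congr (Equiv.subtypeSubtypeEquivSubtypeInter _ _), Nat.card_eq_fintype_card,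
      Fintype.card_subtype]
    congr 1
    ext x
    simp
  · by_cases h : ∃ u : V, Sum.inl u ∈ W
    · rw [if_pos h]
      have hne : (∃ x : (↑W : Set (V ⊕ G.edgeSet)), ¬ IsoIn G W x.val) :=
        (exists_notIso_iff G W).mpr h
      haveI : Unique (PLift (∃ x : (↑W : Set (V ⊕ G.edgeSet)), ¬ IsoIn G W x.val)) :=
        ⟨⟨⟨hne⟩⟩, fun _ => Subsingleton.elim _ _⟩
      exact Nat.card_unique
    · rw [if_neg h]
      have hne : ¬ (∃ x : (↑W : Set (V ⊕ G.edgeSet)), ¬ IsoIn G W x.val) :=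
        fun hc => h ((exists_notIso_iff G W).mp hc)
      haveI : IsEmpty (PLift (∃ x : (↑W : Set (V ⊕ G.edgeSet)), ¬ IsoIn G W x.val)) :=
        ⟨fun x => hne x.down⟩
      exact Nat.card_of_isEmpty

lemma count_insert' {α : Type*} [Fintype α] [DecidableEq α] (a b c : α)
    (hab : a ≠ b) (hac : a ≠ c) (hbc : b ≠ c) (j : ℕ) :
    ((Finset.powersetCard (j + 1) (Finset.univ : Finset α)).filter
        (fun W => a ∈ W ∧ b ∉ W ∧ c ∉ W)).card
      = (Fintype.card α - 3).choose j := by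
  have hT : ((((Finset.univ : Finset α).erase b).erase c).erase a).card
      = Fintype.card α - 3 := by
    rw [Finset.card_erase_of_mem, Finset.card_erase_of_mem, Finset.card_erase_of_mem,
      Finset.card_univ]
    · omega
    · exact Finset.mem_univ b
    · exact Finset.mem_erase.mpr ⟨hbc.symm, Finset.mem_univ c⟩
    · exact Finset.mem_erase.mpr ⟨hac, Finset.mem_erase.mpr ⟨hab, Finset.mem_univ a⟩⟩
  rw [← hT, ← Finset.card_powersetCard j ((((Finset.univ : Finset α).erase b).erase c).erase a)]
  apply Finset.card_bij' (fun W _ => W.erase a) (fun W _ => insert a W)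
  · intro W hW
    rw [Finset.mem_filter] at hW
    exact Finset.insert_erase hW.2.1
  · intro W hW
    rw [Finset.mem_powersetCard] at hW
    have haW : a ∉ W := fun h => (Finset.mem_erase.mp (hW.1 h)).1 rfl
    exact Finset.erase_insert haW
  · intro W hW
    rw [Finset.mem_filter, Finset.mem_powersetCard] at hW
    obtain ⟨⟨_, hcard⟩, haW, hbW, hcW⟩ := hW
    rw [Finset.mem_powersetCard]
    constructor
    · intro x hx
      rw [Finset.mem_erase] at hx
      exact Finset.mem_erase.mpr ⟨hx.1, Finset.mem_erase.mpr
        ⟨fun h => hcW (h ▸ hx.2), Finset.mem_erase.mpr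
          ⟨fun h => hbW (h ▸ hx.2), Finset.mem_univ _⟩⟩⟩
    · rw [Finset.card_erase_of_mem haW, hcard]
      omega
  · intro W hW
    rw [Finset.mem_powersetCard] at hW
    have hsub : ∀ x ∈ W, x ≠ a ∧ x ≠ c ∧ x ≠ b := by
      intro x hx
      have := hW.1 hx
      simp only [Finset.mem_erase, Finset.mem_univ, and_true] at this
      tauto
    have haW : a ∉ W := fun h => (hsub a h).1 rfl
    rw [Finset.mem_filter, Finset.mem_powersetCard]
    refine ⟨⟨Finset.subset_univ _, by rw [Finset.card_insert_of_notMem haW, hW.2]⟩,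
      Finset.mem_insert_self a W, ?_, ?_⟩
    · rw [Finset.mem_insert]
      rintro (rfl | h)
      · exact hab rfl
      · exact (hsub b h).2.2 rfl
    · rw [Finset.mem_insert]
      rintro (rfl | h)
      · exact hac rfl
      · exact (hsub c h).2.1 rfl

lemma count_e (e : G.edgeSet) (j : ℕ) :
    ((Finset.powersetCard (j + 1) (Finset.univ : Finset (V ⊕ G.edgeSet))).filter
        (fun W => Sum.inr e ∈ W ∧ IsoIn G W (Sum.inr e))).card
      = (Fintype.card (V ⊕ G.edgeSet) - 3).choose j := by
  obtain ⟨e, he⟩ := e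
  induction e using Sym2.ind with
  | _ u v =>
    have huv : u ≠ v := G.ne_of_adj (by simpa using he)
    have hfc : ∀ W : Finset (V ⊕ G.edgeSet),
        (Sum.inr ⟨s(u, v), he⟩ ∈ W ∧ IsoIn G W (Sum.inr ⟨s(u, v), he⟩)) ↔
        (Sum.inr ⟨s(u, v), he⟩ ∈ W ∧ Sum.inl u ∉ W ∧ Sum.inl v ∉ W) := by
      intro W
      constructor
      · rintro ⟨h1, h2⟩
        exact ⟨h1, h2 u (by simp), h2 v (by simp)⟩
      · rintro ⟨h1, h2, h3⟩
        refine ⟨h1, ?_⟩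
        intro w hw
        rcases Sym2.mem_iff.mp hw with rfl | rfl
        · exact h2
        · exact h3
    rw [Finset.filter_congr (fun W _ => hfc W)]
    exact count_insert' (Sum.inr ⟨s(u, v), he⟩ : V ⊕ G.edgeSet) (Sum.inl u) (Sum.inl v)
      (by simp) (by simp) (by simp [huv]) j

lemma inl_free_card (j : ℕ) :
    ((Finset.powersetCard (j + 1) (Finset.univ : Finset (V ⊕ G.edgeSet))).filter
        (fun W => ¬ ∃ u : V, Sum.inl u ∈ W)).card
      = (Fintype.card G.edgeSet).choose (j + 1) := by
  have hE : ((Finset.univ : Finset (V ⊕ G.edgeSet)).filter (fun x => x.isRight)).card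
      = Fintype.card G.edgeSet := by
    rw [show ((Finset.univ : Finset (V ⊕ G.edgeSet)).filter (fun x => x.isRight))
        = (Finset.univ : Finset G.edgeSet).map ⟨Sum.inr, Sum.inr_injective⟩ by
      ext x
      rcases x with u | e <;> simp]
    rw [Finset.card_map, Finset.card_univ]
  rw [← hE, ← Finset.card_powersetCard]
  congr 1
  ext W
  rw [Finset.mem_filter, Finset.mem_powersetCard, Finset.mem_powersetCard]
  constructor
  · rintro ⟨⟨-, hcard⟩, hno⟩
    refine ⟨?_, hcard⟩
    intro x hx
    rcases x with u | e
    · exact absurd ⟨u, hx⟩ hno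
    · simp
  · rintro ⟨hsub, hcard⟩
    refine ⟨⟨Finset.subset_univ _, hcard⟩, ?_⟩
    rintro ⟨u, hu⟩
    simpa using hsub hu
end

/-- For a graph `G` with `n` vertices and `m` edges, the graded Betti numbers of the
edge ideal of the complement of `BL(G)` (computed, via the
Fröberg/Dochtermann–Engström formula, as a sum over `(j+1)`-subsets `W` of the number of
connected components of `BL(G)[W]` minus one) satisfy
`β_{j,j+1} = m·binom(m+n−3, j) − binom(m, j+1)` for every `j ≥ 1`. -/
theorem betti_compl_boothLueker {V : Type*} [Fintype V] [DecidableEq V]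
    (G : SimpleGraph V) [DecidableRel G.Adj]
    (n m : ℕ) (hn : n = Fintype.card V) (hm : m = G.edgeFinset.card)
    (j : ℕ) (hj : 1 ≤ j) :
    ∑ W ∈ Finset.powersetCard (j + 1) (Finset.univ : Finset (V ⊕ G.edgeSet)),
        ((Nat.card (SimpleGraph.induce (↑W) (BoothLueker G)).ConnectedComponent : ℤ) - 1)
      = (m : ℤ) * ((m + n - 3).choose j : ℤ) - (m.choose (j + 1) : ℤ) := by
  have hmE : m = Fintype.card G.edgeSet := by
    rw [hm, SimpleGraph.edgeFinset, Set.toFinset_card]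
  have hsum : ∑ W ∈ Finset.powersetCard (j + 1) (Finset.univ : Finset (V ⊕ G.edgeSet)),
        ((Nat.card (SimpleGraph.induce (↑W) (BoothLueker G)).ConnectedComponent : ℤ) - 1)
      = ∑ W ∈ Finset.powersetCard (j + 1) (Finset.univ : Finset (V ⊕ G.edgeSet)),
          (((W.filter (IsoIn G W)).card : ℤ) +
            ((if ∃ u : V, Sum.inl u ∈ W then (1 : ℤ) else 0) - 1)) := by
    refine Finset.sum_congr rfl (fun W _ => ?_)
    rw [card_comps G W]
    push_cast [apply_ite (Nat.cast : ℕ → ℤ)]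
    ring
  rw [hsum, Finset.sum_add_distrib]
  have hA : ∑ W ∈ Finset.powersetCard (j + 1) (Finset.univ : Finset (V ⊕ G.edgeSet)),
        (W.filter (IsoIn G W)).card
      = (Fintype.card G.edgeSet) * ((Fintype.card (V ⊕ G.edgeSet) - 3).choose j) := by
    have h1 : ∀ W ∈ Finset.powersetCard (j + 1) (Finset.univ : Finset (V ⊕ G.edgeSet)),
        (W.filter (IsoIn G W)).card
          = ∑ x ∈ (Finset.univ : Finset (V ⊕ G.edgeSet)),
              if x ∈ W ∧ IsoIn G W x then 1 else 0 := by
      intro W _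
      have hset : W.filter (IsoIn G W)
          = (Finset.univ : Finset (V ⊕ G.edgeSet)).filter (fun x => x ∈ W ∧ IsoIn G W x) := by
        ext x; simp
      rw [hset, Finset.card_filter]
    rw [Finset.sum_congr rfl h1, Finset.sum_comm, Fintype.sum_sum_type]
    have hl : ∀ u : V,
        ∑ W ∈ Finset.powersetCard (j + 1) (Finset.univ : Finset (V ⊕ G.edgeSet)),
          (if Sum.inl u ∈ W ∧ IsoIn G W (Sum.inl u) then 1 else 0) = 0 := by
      intro u
      apply Finset.sum_eq_zero
      intro W _
      rw [if_neg]
      rintro ⟨-, h⟩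
      exact h
    have hr : ∀ e : G.edgeSet,
        ∑ W ∈ Finset.powersetCard (j + 1) (Finset.univ : Finset (V ⊕ G.edgeSet)),
          (if Sum.inr e ∈ W ∧ IsoIn G W (Sum.inr e) then 1 else 0)
        = (Fintype.card (V ⊕ G.edgeSet) - 3).choose j := by
      intro e
      rw [← Finset.card_filter, count_e]
    rw [Finset.sum_congr rfl (fun u _ => hl u), Finset.sum_const_zero, zero_add,
      Finset.sum_congr rfl (fun e _ => hr e), Finset.sum_const, Finset.card_univ, smul_eq_mul]
  have hB : ∑ W ∈ Finset.powersetCard (j + 1) (Finset.univ : Finset (V ⊕ G.edgeSet)),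
        ((if ∃ u : V, Sum.inl u ∈ W then (1 : ℤ) else 0) - 1)
      = -(((Fintype.card G.edgeSet).choose (j + 1) : ℤ)) := by
    have h2 : ∀ W ∈ Finset.powersetCard (j + 1) (Finset.univ : Finset (V ⊕ G.edgeSet)),
        (if ∃ u : V, Sum.inl u ∈ W then (1 : ℤ) else 0) - 1
          = -(if ¬ ∃ u : V, Sum.inl u ∈ W then (1 : ℤ) else 0) := by
      intro W _
      by_cases h : ∃ u : V, Sum.inl u ∈ W <;> simp [h]
    rw [Finset.sum_congr rfl h2, Finset.sum_neg_distrib, Finset.sum_boole, inl_free_card]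
  have hcast : (∑ W ∈ Finset.powersetCard (j + 1) (Finset.univ : Finset (V ⊕ G.edgeSet)),
        ((W.filter (IsoIn G W)).card : ℤ))
      = ((∑ W ∈ Finset.powersetCard (j + 1) (Finset.univ : Finset (V ⊕ G.edgeSet)),
          (W.filter (IsoIn G W)).card : ℕ) : ℤ) := by
    push_cast
    rfl
  rw [hcast, hA, hB, hmE]
  have hN : Fintype.card (V ⊕ G.edgeSet) = Fintype.card V + Fintype.card G.edgeSet :=
    Fintype.card_sum
  have h3 : Fintype.card (V ⊕ G.edgeSet) - 3 = Fintype.card G.edgeSet + n - 3 := by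
    rw [hN, hn]; omega
  rw [h3]
  push_cast
  ring
end

section
/- Let G be a graph with n vertices and m edges. The Boij–Söderberg coefficients c_i of the edge ideal of the complement of BL(G) satisfy: c_i = 0 for i < m; c_i = m/(i(i+1)) for m ≤ i ≤ m+n−4; c_{m+n−3} = m/(m+n−3); and c_i = 0 for i > m+n−3. -/
open Finset

section BSaux

-- alternating sum of binomials over ℚ
private lemma bs_alt_choose (d : ℕ) :
    ∑ t ∈ range (d + 1), (-1 : ℚ) ^ t * (d.choose t : ℚ) =
      if d = 0 then 1 else 0 := by
  have h := @Int.alternating_sum_range_choose d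
  have : ((∑ t ∈ range (d + 1), ((-1) ^ t * d.choose t : ℤ) : ℤ) : ℚ)
      = ∑ t ∈ range (d + 1), (-1 : ℚ) ^ t * (d.choose t : ℚ) := by
    push_cast
    exact Finset.sum_congr (by rw [Nat.add_comm]) (fun _ _ => by ring)
  rw [← this, h]
  split <;> simp

private lemma bs_orth (n k : ℕ) :
    ∑ s ∈ range (n + 1), (-1 : ℚ) ^ s * (n.choose s : ℚ) * (s.choose k : ℚ) =
      if k = n then (-1 : ℚ) ^ n else 0 := by
  by_cases hk : k ≤ n
  · have hsub : ∑ s ∈ range (n + 1), (-1 : ℚ) ^ s * (n.choose s : ℚ) * (s.choose k : ℚ)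
        = ∑ s ∈ Ico k (n + 1), (-1 : ℚ) ^ s * (n.choose s : ℚ) * (s.choose k : ℚ) := by
      rw [← Nat.Ico_zero_eq_range]
      refine (Finset.sum_subset ?_ ?_).symm
      · intro x hx; simp only [mem_Ico] at *; omega
      · intro x hx hx'
        simp only [mem_Ico] at hx hx'
        have : x < k := by omega
        rw [Nat.choose_eq_zero_of_lt this]; simp
    rw [hsub, Finset.sum_Ico_eq_sum_range]
    have hre : ∀ t ∈ range (n + 1 - k),
        (-1 : ℚ) ^ (k + t) * (n.choose (k + t) : ℚ) * ((k + t).choose k : ℚ)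
        = (-1 : ℚ) ^ k * (n.choose k : ℚ) * ((-1 : ℚ) ^ t * ((n - k).choose t : ℚ)) := by
      intro t ht
      simp only [mem_range] at ht
      have h1 : n.choose (k + t) * (k + t).choose k = n.choose k * (n - k).choose (k + t - k) :=
        Nat.choose_mul (by omega)
      have h2 : k + t - k = t := by omega
      rw [h2] at h1
      have h1' : ((n.choose (k + t) : ℚ)) * ((k + t).choose k : ℚ)
          = (n.choose k : ℚ) * ((n - k).choose t : ℚ) := by exact_mod_cast h1
      rw [pow_add]
      linear_combination ((-1 : ℚ) ^ k * (-1 : ℚ) ^ t) * h1'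
    rw [Finset.sum_congr rfl hre, ← Finset.mul_sum]
    have h3 : n + 1 - k = (n - k) + 1 := by omega
    rw [h3, bs_alt_choose (n - k)]
    by_cases hkn : k = n
    · subst hkn; simp
    · have : n - k ≠ 0 := by omega
      rw [if_neg this, if_neg hkn, mul_zero]
  · rw [if_neg (by omega)]
    refine Finset.sum_eq_zero fun s hs => ?_
    simp only [mem_range] at hs
    rw [Nat.choose_eq_zero_of_lt (by omega : s < k)]
    simp

private lemma bs_Usum (N k : ℕ) :
    ∑ s ∈ range N, (-1 : ℚ) ^ (s + 1) * (N.choose (s + 1) : ℚ) * (s.choose k : ℚ) =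
      if k + 1 ≤ N then (-1 : ℚ) ^ (k + 1) else 0 := by
  induction N with
  | zero => simp
  | succ N ih =>
    have hre : ∀ s ∈ range (N + 1),
        (-1 : ℚ) ^ (s + 1) * ((N + 1).choose (s + 1) : ℚ) * (s.choose k : ℚ)
        = (-1 : ℚ) ^ (s + 1) * (N.choose (s + 1) : ℚ) * (s.choose k : ℚ)
          + (-1) * ((-1 : ℚ) ^ s * (N.choose s : ℚ) * (s.choose k : ℚ)) := by
      intro s _
      rw [Nat.choose_succ_succ N s]
      push_cast
      ring
    rw [Finset.sum_congr rfl hre, Finset.sum_add_distrib, ← Finset.mul_sum, bs_orth,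
      Finset.sum_range_succ, Nat.choose_succ_self, Nat.cast_zero]
    rw [mul_zero, zero_mul, add_zero, ih]
    rcases lt_trichotomy k N with h | h | h
    · rw [if_pos (by omega), if_neg (by omega), if_pos (by omega)]; ring
    · subst h
      rw [if_neg (by omega), if_pos rfl, if_pos (by omega)]; ring
    · rw [if_neg (by omega), if_neg (by omega), if_neg (by omega)]; ring

private lemma bs_Vsum (M k : ℕ) :
    ∑ s ∈ range M, (-1 : ℚ) ^ (s + 1) * (M.choose (s + 2) : ℚ) * (s.choose k : ℚ) =
      if k + 2 ≤ M then (-1 : ℚ) ^ (k + 1) * ((M : ℚ) - 1 - (k : ℚ)) else 0 := by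
  induction M with
  | zero => simp
  | succ M ih =>
    have hre : ∀ s ∈ range (M + 1),
        (-1 : ℚ) ^ (s + 1) * ((M + 1).choose (s + 2) : ℚ) * (s.choose k : ℚ)
        = (-1 : ℚ) ^ (s + 1) * (M.choose (s + 2) : ℚ) * (s.choose k : ℚ)
          + (-1 : ℚ) ^ (s + 1) * (M.choose (s + 1) : ℚ) * (s.choose k : ℚ) := by
      intro s _
      rw [Nat.choose_succ_succ M (s + 1)]
      push_cast
      ring
    rw [Finset.sum_congr rfl hre, Finset.sum_add_distrib]
    rw [Finset.sum_range_succ, (by rw [Nat.choose_eq_zero_of_lt (by omega)]; simp :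
      (-1 : ℚ) ^ (M + 1) * (M.choose (M + 2) : ℚ) * (M.choose k : ℚ) = 0), add_zero, ih]
    rw [Finset.sum_range_succ, Nat.choose_succ_self, Nat.cast_zero, mul_zero, zero_mul,
      add_zero, bs_Usum]
    rcases lt_trichotomy (k + 2) (M + 1) with h | h | h
    · rw [if_pos (by omega), if_pos (by omega), if_pos (by omega)]; push_cast; ring
    · rw [if_neg (by omega), if_pos (by omega), if_pos (by omega)]
      have hM : M = k + 1 := by omega
      subst hM; push_cast; ring
    · rw [if_neg (by omega), if_neg (by omega), if_neg (by omega)]; ring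

private lemma bs_Usum_ext (N k L : ℕ) (h : N ≤ L) :
    ∑ s ∈ range L, (-1 : ℚ) ^ (s + 1) * (N.choose (s + 1) : ℚ) * (s.choose k : ℚ) =
      if k + 1 ≤ N then (-1 : ℚ) ^ (k + 1) else 0 := by
  rw [← bs_Usum N k]
  refine (Finset.sum_subset (Finset.range_subset_range.2 h) ?_).symm
  intro x hx hx'
  simp only [mem_range] at hx hx'
  rw [Nat.choose_eq_zero_of_lt (by omega)]
  simp

private lemma bs_Vsum_ext (M k L : ℕ) (h : M ≤ L) :
    ∑ s ∈ range L, (-1 : ℚ) ^ (s + 1) * (M.choose (s + 2) : ℚ) * (s.choose k : ℚ) =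
      if k + 2 ≤ M then (-1 : ℚ) ^ (k + 1) * ((M : ℚ) - 1 - (k : ℚ)) else 0 := by
  rw [← bs_Vsum M k]
  refine (Finset.sum_subset (Finset.range_subset_range.2 h) ?_).symm
  intro x hx hx'
  simp only [mem_range] at hx hx'
  rw [Nat.choose_eq_zero_of_lt (by omega)]
  simp

private lemma bs_frac_split (s r : ℕ) :
    (1 / ((s : ℚ) + 1)) * (((s + 2).choose (r + 2) : ℚ)) =
      (s.choose (r + 1) : ℚ) / ((r : ℚ) + 2) + (s.choose r : ℚ) / ((r : ℚ) + 1) := by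
  have h1 : (s + 1) * s.choose r = (s + 1).choose (r + 1) * (r + 1) := Nat.add_one_mul_choose_eq s r
  have h2 : (s + 1) * s.choose (r + 1) = (s + 1).choose (r + 2) * (r + 2) :=
    Nat.add_one_mul_choose_eq s (r + 1)
  have h3 : (s + 2).choose (r + 2) = (s + 1).choose (r + 1) + (s + 1).choose (r + 2) :=
    Nat.choose_succ_succ (s + 1) (r + 1)
  have h1' : ((s : ℚ) + 1) * (s.choose r : ℚ) = ((s + 1).choose (r + 1) : ℚ) * ((r : ℚ) + 1) := by
    exact_mod_cast h1
  have h2' : ((s : ℚ) + 1) * (s.choose (r + 1) : ℚ)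
      = ((s + 1).choose (r + 2) : ℚ) * ((r : ℚ) + 2) := by exact_mod_cast h2
  have h3' : ((s + 2).choose (r + 2) : ℚ)
      = ((s + 1).choose (r + 1) : ℚ) + ((s + 1).choose (r + 2) : ℚ) := by
    exact_mod_cast h3
  have hs : ((s : ℚ) + 1) ≠ 0 := by positivity
  have hr1 : ((r : ℚ) + 1) ≠ 0 := by positivity
  have hr2 : ((r : ℚ) + 2) ≠ 0 := by positivity
  field_simp
  linear_combination (-((r : ℚ) + 2)) * h1' + (-((r : ℚ) + 1)) * h2'
    + (((r : ℚ) + 1) * ((r : ℚ) + 2)) * h3'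

private lemma bs_pointwise (N M s r : ℕ) (mQ : ℚ) :
    (mQ * (N.choose (1 + s) : ℚ) - (M.choose (1 + s + 1) : ℚ)) *
      ((-1 : ℚ) ^ (1 + s + (r + 1)) * (1 / ((1 + s : ℕ) : ℚ))
        * (((1 + s + 1).choose (r + 1 + 1) : ℚ)))
    = (-1 : ℚ) ^ (r + 1) *
      ( (mQ * ((-1 : ℚ) ^ (s + 1) * (N.choose (s + 1) : ℚ) * (s.choose (r + 1) : ℚ))
          - ((-1 : ℚ) ^ (s + 1) * (M.choose (s + 2) : ℚ) * (s.choose (r + 1) : ℚ)))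
          / ((r : ℚ) + 2)
      + (mQ * ((-1 : ℚ) ^ (s + 1) * (N.choose (s + 1) : ℚ) * (s.choose r : ℚ))
          - ((-1 : ℚ) ^ (s + 1) * (M.choose (s + 2) : ℚ) * (s.choose r : ℚ)))
          / ((r : ℚ) + 1) ) := by
  have e1 : 1 + s = s + 1 := by omega
  rw [e1]
  have e2 : s + 1 + 1 = s + 2 := by omega
  have e3 : r + 1 + 1 = r + 2 := by omega
  rw [e2, e3, pow_add]
  have hcast : ((s + 1 : ℕ) : ℚ) = (s : ℚ) + 1 := by push_cast; ring
  rw [hcast]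
  have h := bs_frac_split s r
  linear_combination ((-1 : ℚ) ^ (s + 1) * (-1 : ℚ) ^ (r + 1)
    * (mQ * (N.choose (s + 1) : ℚ) - (M.choose (s + 2) : ℚ))) * h

end BSaux

/-- Let `G` be a graph with `n` vertices and `m` edges.  The Boij–Söderberg coefficients
of the edge ideal of the complement of `BL(G)` — obtained from the Betti numbers
`β_j = m·binom(m+n−3, j) − binom(m, j+1)` via
`c_i = ∑_j β_j (−1)^{j−i} (1/j) binom(j+1, i+1)` — satisfy: `c_i = 0` for `i < m`,
`c_i = m/(i(i+1))` for `m ≤ i ≤ m+n−4`, `c_{m+n−3} = m/(m+n−3)`, and `c_i = 0` for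
`i > m+n−3`. -/
theorem boij_soderberg_compl_boothLueker {V : Type*} [Fintype V] [DecidableEq V]
    (G : SimpleGraph V) [DecidableRel G.Adj]
    (n m : ℕ) (hn : n = Fintype.card V) (hm : m = G.edgeFinset.card)
    (β : ℕ → ℚ)
    (hβ : ∀ j, β j = (m : ℚ) * ((m + n - 3).choose j : ℚ) - (m.choose (j + 1) : ℚ))
    (c : ℕ → ℚ)
    (hc : ∀ i, c i = ∑ j ∈ Finset.Icc 1 (n + m - 1),
        β j * ((-1 : ℚ) ^ (j + i) * (1 / (j : ℚ)) * ((j + 1).choose (i + 1) : ℚ))) :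
    (∀ i, 1 ≤ i → i < m → c i = 0) ∧
    (∀ i, m ≤ i → i ≤ m + n - 4 → c i = (m : ℚ) / ((i : ℚ) * ((i : ℚ) + 1))) ∧
    c (m + n - 3) = (m : ℚ) / ((m : ℚ) + (n : ℚ) - 3) ∧
    (∀ i, m + n - 3 < i → c i = 0) := by
  have hedge : m ≤ n.choose 2 := by
    rw [hm, hn]; exact SimpleGraph.card_edgeFinset_le_card_choose_two
  by_cases hm0 : m = 0
  · -- degenerate case m = 0
    have hc0 : ∀ i, c i = 0 := by
      intro i
      rw [hc]
      refine Finset.sum_eq_zero fun j hj => ?_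
      simp only [Finset.mem_Icc] at hj
      rw [hβ, hm0]
      rw [Nat.choose_eq_zero_of_lt (by omega : 0 < j + 1)]
      simp
    refine ⟨fun i h1 h2 => by omega, fun i h1 h2 => ?_, ?_, fun i _ => hc0 i⟩
    · rw [hc0, hm0]; simp
    · rw [hc0, hm0]; simp
  · -- m ≥ 1
    have hm1 : 1 ≤ m := by omega
    have hn2 : 2 ≤ n := by
      by_contra h
      push_neg at h
      interval_cases n <;> simp [Nat.choose] at hedge <;> omega
    -- master formula for c (r+1)
    have master : ∀ r : ℕ, c (r + 1) =
        (-1 : ℚ) ^ (r + 1) *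
        ( ((m : ℚ) * (if r + 1 + 1 ≤ m + n - 3 then (-1 : ℚ) ^ (r + 1 + 1) else 0)
            - (if r + 1 + 2 ≤ m then (-1 : ℚ) ^ (r + 1 + 1)
                * ((m : ℚ) - 1 - ((r + 1 : ℕ) : ℚ)) else 0)) / ((r : ℚ) + 2)
        + ((m : ℚ) * (if r + 1 ≤ m + n - 3 then (-1 : ℚ) ^ (r + 1) else 0)
            - (if r + 2 ≤ m then (-1 : ℚ) ^ (r + 1) * ((m : ℚ) - 1 - (r : ℚ)) else 0))
            / ((r : ℚ) + 1) ) := by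
      intro r
      rw [hc]
      have hIcc : Finset.Icc 1 (n + m - 1) = Finset.Ico 1 (n + m - 1 + 1) :=
        (Finset.Ico_add_one_right_eq_Icc 1 (n + m - 1))
      rw [hIcc, Finset.sum_Ico_eq_sum_range]
      have hL : n + m - 1 + 1 - 1 = n + m - 1 := by omega
      rw [hL]
      have hpt : ∀ s ∈ range (n + m - 1),
          β (1 + s) * ((-1 : ℚ) ^ (1 + s + (r + 1)) * (1 / ((1 + s : ℕ) : ℚ))
            * (((1 + s + 1).choose (r + 1 + 1) : ℚ)))
          = (-1 : ℚ) ^ (r + 1) *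
            ( ((m : ℚ) * ((-1 : ℚ) ^ (s + 1) * ((m + n - 3).choose (s + 1) : ℚ)
                  * (s.choose (r + 1) : ℚ))
                - ((-1 : ℚ) ^ (s + 1) * (m.choose (s + 2) : ℚ) * (s.choose (r + 1) : ℚ)))
                / ((r : ℚ) + 2)
            + ((m : ℚ) * ((-1 : ℚ) ^ (s + 1) * ((m + n - 3).choose (s + 1) : ℚ)
                  * (s.choose r : ℚ))
                - ((-1 : ℚ) ^ (s + 1) * (m.choose (s + 2) : ℚ) * (s.choose r : ℚ)))
                / ((r : ℚ) + 1) ) := by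
        intro s _
        rw [hβ]
        exact bs_pointwise (m + n - 3) m s r (m : ℚ)
      rw [Finset.sum_congr rfl hpt, ← Finset.mul_sum, Finset.sum_add_distrib,
        ← Finset.sum_div, ← Finset.sum_div, Finset.sum_sub_distrib, Finset.sum_sub_distrib,
        ← Finset.mul_sum, ← Finset.mul_sum,
        bs_Usum_ext (m + n - 3) (r + 1) (n + m - 1) (by omega),
        bs_Usum_ext (m + n - 3) r (n + m - 1) (by omega),
        bs_Vsum_ext m (r + 1) (n + m - 1) (by omega),
        bs_Vsum_ext m r (n + m - 1) (by omega)]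
    refine ⟨?_, ?_, ?_, ?_⟩
    · -- part 1 : 1 ≤ i < m, c i = 0
      intro i h1 h2
      have hm2 : 2 ≤ m := by omega
      have hn3 : 3 ≤ n := by
        by_contra h
        push_neg at h
        interval_cases n <;> simp [Nat.choose] at hedge <;> omega
      obtain ⟨r, rfl⟩ : ∃ r, i = r + 1 := ⟨i - 1, by omega⟩
      rw [master r]
      have hr1 : ((r : ℚ) + 1) ≠ 0 := by positivity
      have hr2 : ((r : ℚ) + 2) ≠ 0 := by positivity
      rw [if_pos (by omega : r + 1 + 1 ≤ m + n - 3), if_pos (by omega : r + 1 ≤ m + n - 3),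
        if_pos (by omega : r + 2 ≤ m)]
      by_cases hcase : r + 1 + 2 ≤ m
      · rw [if_pos hcase]
        push_cast
        have hx : (-1 : ℚ) ^ (r * 2) = 1 := by
          rw [mul_comm, pow_mul]; norm_num
        field_simp
        ring_nf
        try simp only [hx]
        try ring_nf
      · rw [if_neg hcase]
        have hmr : m = r + 2 := by omega
        subst hmr
        push_cast
        have hx : (-1 : ℚ) ^ (r * 2) = 1 := by
          rw [mul_comm, pow_mul]; norm_num
        field_simp
        ring_nf
        try simp only [hx]
        try ring_nf
    · -- part 2 : m ≤ i ≤ m + n - 4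
      intro i h1 h2
      obtain ⟨r, rfl⟩ : ∃ r, i = r + 1 := ⟨i - 1, by omega⟩
      rw [master r]
      have hr1 : ((r : ℚ) + 1) ≠ 0 := by positivity
      have hr2 : ((r : ℚ) + 2) ≠ 0 := by positivity
      rw [if_pos (by omega : r + 1 + 1 ≤ m + n - 3), if_pos (by omega : r + 1 ≤ m + n - 3),
        if_neg (by omega : ¬ r + 1 + 2 ≤ m), if_neg (by omega : ¬ r + 2 ≤ m)]
      push_cast
      have hx : (-1 : ℚ) ^ (r * 2) = 1 := by
        rw [mul_comm, pow_mul]; norm_num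
      field_simp
      ring_nf
      try simp only [hx]
      try ring_nf
    · -- part 3 : c (m+n-3) = m/(m+n-3)
      by_cases hn3 : 3 ≤ n
      · obtain ⟨r, hr⟩ : ∃ r, m + n - 3 = r + 1 := ⟨m + n - 4, by omega⟩
        rw [hr, master r]
        have hr1 : ((r : ℚ) + 1) ≠ 0 := by positivity
        rw [if_neg (by omega : ¬ r + 1 + 1 ≤ m + n - 3),
          if_pos (by omega : r + 1 ≤ m + n - 3),
          if_neg (by omega : ¬ r + 1 + 2 ≤ m), if_neg (by omega : ¬ r + 2 ≤ m)]
        have hcast : (m : ℚ) + (n : ℚ) - 3 = (r : ℚ) + 1 := by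
          have : ((m + n - 3 : ℕ) : ℚ) = (m : ℚ) + (n : ℚ) - 3 := by
            have h3 : 3 ≤ m + n := by omega
            push_cast [Nat.cast_sub h3]
            ring
          rw [hr] at this
          push_cast at this
          linarith
        rw [hcast]
        have hx : (-1 : ℚ) ^ (r * 2) = 1 := by
          rw [mul_comm, pow_mul]; norm_num
        field_simp
        ring_nf
        try simp only [hx]
        try ring_nf
      · -- n = 2, so m = 1, m + n - 3 = 0
        have hn2' : n = 2 := by omega
        have hm1' : m = 1 := by
          subst hn2'
          simp [Nat.choose] at hedge
          omega
        subst hn2' hm1'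
        have hc0 : c (1 + 2 - 3) = 0 := by
          rw [hc]
          refine Finset.sum_eq_zero fun j hj => ?_
          simp only [Finset.mem_Icc] at hj
          rw [hβ]
          rw [Nat.choose_eq_zero_of_lt (by omega : 0 < j),
            Nat.choose_eq_zero_of_lt (by omega : 1 < j + 1)]
          simp
        rw [hc0]
        norm_num
    · -- part 4 : i > m + n - 3
      intro i hi
      obtain ⟨r, rfl⟩ : ∃ r, i = r + 1 := ⟨i - 1, by omega⟩
      rw [master r]
      rw [if_neg (by omega : ¬ r + 1 + 1 ≤ m + n - 3),
        if_neg (by omega : ¬ r + 1 ≤ m + n - 3),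
        if_neg (by omega : ¬ r + 1 + 2 ≤ m), if_neg (by omega : ¬ r + 2 ≤ m)]
      simp
end
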